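/- Define q_{-1} = 1/√3 and q_k = 12^{-k}·Z(k+1) for k ≥ 0. Then q_{-1} + 2·Σ_{k≥0} q_k = 1 and q_{-1} - 2·Σ_{k≥0} k·q_k = 0. -/

import Mathlib

/-- `Z(1) = (2-√3)/4` and `Z(p) = 6^p·(2p-5)!!/(8√3·p!)` for `p ≥ 2`. -/
noncomputable def Zfun : ℕ → ℝ := fun p =>
  if p = 1 then (2 - Real.sqrt 3) / 4
  else 6 ^ p * Nat.doubleFactorial (2 * p - 5) / (8 * Real.sqrt 3 * Nat.factorial p)

/-- `q_k = 12^{-k} Z(k+1)` for `k ≥ 0`. -/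
noncomputable def qk (k : ℕ) : ℝ := Zfun (k + 1) / 12 ^ k



open Finset Filter Nat

noncomputable def dfac (n : ℕ) : ℕ := Nat.doubleFactorial (2 * n - 1)

lemma dfac_zero : dfac 0 = 1 := rfl

lemma dfac_succ (n : ℕ) : dfac (n + 1) = (2 * n + 1) * dfac n := by
  unfold dfac
  rcases n with _ | m
  · rfl
  · have h1 : 2 * (m + 1 + 1) - 1 = (2 * m + 1) + 2 := by omega
    have h2 : 2 * (m + 1) - 1 = 2 * m + 1 := by omega
    rw [h1, h2, Nat.doubleFactorial_add_two]
    ring_nf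

lemma sqrt3_pos : (0:ℝ) < Real.sqrt 3 := Real.sqrt_pos.2 (by norm_num)

lemma sqrt3_sq : Real.sqrt 3 * Real.sqrt 3 = 3 := Real.mul_self_sqrt (by norm_num)

lemma qk_zero : qk 0 = (2 - Real.sqrt 3) / 4 := by
  simp [qk, Zfun]

lemma qk_succ (k : ℕ) :
    qk (k + 1) = Real.sqrt 3 * dfac k / (8 * (k + 2)! * 2 ^ k) := by
  have hne : k + 1 + 1 ≠ 1 := by omega
  have harg : 2 * (k + 1 + 1) - 5 = 2 * k - 1 := by omega
  have h12 : (12:ℝ) ^ (k+1) = 12 * (6 ^ k * 2 ^ k) := by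
    rw [pow_succ]
    rw [show (12:ℝ) = 6 * 2 by norm_num, mul_pow]
    ring
  have h6 : (6:ℝ) ^ (k+1+1) = 36 * 6 ^ k := by ring
  rw [qk, Zfun]
  simp only [hne, if_neg, harg, ite_false]
  rw [h6, h12]
  have hfac : ((k+1+1)! : ℝ) ≠ 0 := by positivity
  have h6k : (6:ℝ) ^ k ≠ 0 := by positivity
  have h2k : (2:ℝ) ^ k ≠ 0 := by positivity
  have hs := sqrt3_pos.ne'
  have : ((k+1+1)! : ℝ) = ((k+2)! : ℝ) := by norm_num
  rw [this]
  unfold dfac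
  field_simp
  linear_combination (-12) * sqrt3_sq

lemma sumA (n : ℕ) : ∑ k ∈ range n, qk (k + 1)
    = Real.sqrt 3 / 12 - Real.sqrt 3 * dfac n / (12 * (n + 1)! * 2 ^ n) := by
  induction n with
  | zero => simp [dfac_zero]
  | succ n ih =>
      rw [Finset.sum_range_succ, ih, qk_succ, dfac_succ]
      have h1 : ((n+2)! : ℝ) = (n+2) * (n+1)! := by
        rw [Nat.factorial_succ]; push_cast; ring
      have h2 : ((n+1+1)! : ℝ) = (n+2) * (n+1)! := h1
      rw [h1]
      have hf : ((n+1)! : ℝ) ≠ 0 := by positivity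
      have h2k : (2:ℝ) ^ n ≠ 0 := by positivity
      push_cast
      field_simp
      ring

lemma sumB (n : ℕ) : ∑ k ∈ range n, ((k:ℝ) + 1) * qk (k + 1)
    = Real.sqrt 3 / 6 - Real.sqrt 3 * (3 * n + 2) * dfac n / (12 * (n + 1)! * 2 ^ n) := by
  induction n with
  | zero => simp [dfac_zero]; ring
  | succ n ih =>
      rw [Finset.sum_range_succ, ih, qk_succ, dfac_succ]
      have h1 : ((n+2)! : ℝ) = (n+2) * (n+1)! := by
        rw [Nat.factorial_succ]; push_cast; ring
      have h2 : ((n+1+1)! : ℝ) = (n+2) * (n+1)! := h1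
      rw [h1]
      have hf : ((n+1)! : ℝ) ≠ 0 := by positivity
      have h2k : (2:ℝ) ^ n ≠ 0 := by positivity
      push_cast
      field_simp
      ring

noncomputable def ee (n : ℕ) : ℝ := (dfac n : ℝ) / ((n + 1)! * 2 ^ n)

lemma ee_pos (n : ℕ) : 0 < ee n := by
  have : 0 < dfac n := Nat.doubleFactorial_pos _
  unfold ee
  positivity

lemma ee_succ (n : ℕ) : ee (n + 1) = ee n * (2 * n + 1) / (2 * (n + 2)) := by
  unfold ee
  rw [dfac_succ]
  have h1 : ((n+1+1)! : ℝ) = (n+2) * (n+1)! := by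
    rw [Nat.factorial_succ]; push_cast; ring
  rw [h1]
  have hf : ((n+1)! : ℝ) ≠ 0 := by positivity
  have h2k : (2:ℝ) ^ n ≠ 0 := by positivity
  push_cast
  field_simp
  ring

lemma ee_bound (n : ℕ) : (((n:ℝ) + 1) * ee n) ^ 2 ≤ 1 / ((n:ℝ) + 1) := by
  induction n with
  | zero => simp [ee, dfac_zero]
  | succ n ih =>
      rw [ee_succ]
      push_cast
      have hpos : (0:ℝ) < (n:ℝ) + 1 := by positivity
      have he := (ee_pos n).le
      have key : ((2*(n:ℝ)+1))^2 * ((n:ℝ)+2) ≤ 4 * ((n:ℝ)+1)^3 := by nlinarith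
      have h1 : (((n:ℝ) + 1 + 1) * (ee n * (2 * n + 1) / (2 * (n + 2)))) ^ 2
          = (((n:ℝ)+1) * ee n) ^ 2 * ((2*(n:ℝ)+1)^2 / (4 * ((n:ℝ)+1)^2)) := by
        push_cast
        field_simp
        ring
      rw [h1]
      have h2 : (((n:ℝ)+1) * ee n) ^ 2 * ((2*(n:ℝ)+1)^2 / (4 * ((n:ℝ)+1)^2))
          ≤ (1 / ((n:ℝ)+1)) * ((2*(n:ℝ)+1)^2 / (4 * ((n:ℝ)+1)^2)) := by
        apply mul_le_mul_of_nonneg_right ih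
        positivity
      refine h2.trans ?_
      have hcomb : 1/((n:ℝ)+1) * ((2*(n:ℝ)+1)^2/(4*((n:ℝ)+1)^2))
          = (2*(n:ℝ)+1)^2 / (4*((n:ℝ)+1)^3) := by
        field_simp
      rw [hcomb, div_le_div_iff₀ (by positivity) (by positivity)]
      nlinarith

lemma mul_ee_tendsto : Tendsto (fun n : ℕ => (3 * (n:ℝ) + 2) * ee n) atTop (nhds 0) := by
  apply squeeze_zero (fun n => mul_nonneg (by positivity) (ee_pos n).le)
    (g := fun n : ℕ => 3 * Real.sqrt (1 / ((n:ℝ) + 1)))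
  · intro n
    have h1 : ((n:ℝ) + 1) * ee n ≤ Real.sqrt (1 / ((n:ℝ) + 1)) := by
      rw [show ((n:ℝ) + 1) * ee n = Real.sqrt ((((n:ℝ) + 1) * ee n) ^ 2) by
        rw [Real.sqrt_sq (mul_nonneg (by positivity) (ee_pos n).le)]]
      exact Real.sqrt_le_sqrt (ee_bound n)
    have h2 : (3 * (n:ℝ) + 2) * ee n ≤ 3 * (((n:ℝ) + 1) * ee n) := by
      have := (ee_pos n).le
      nlinarith
    linarith
  · have h0 : Tendsto (fun n : ℕ => 1 / ((n:ℝ) + 1)) atTop (nhds 0) :=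
      tendsto_one_div_add_atTop_nhds_zero_nat
    have h1 := h0.sqrt
    rw [Real.sqrt_zero] at h1
    simpa using h1.const_mul 3

lemma ee_tendsto : Tendsto ee atTop (nhds 0) := by
  apply squeeze_zero (fun n => (ee_pos n).le) (g := fun n : ℕ => (3 * (n:ℝ) + 2) * ee n)
    (fun n => ?_) mul_ee_tendsto
  show ee n ≤ (3 * (n:ℝ) + 2) * ee n
  have := (ee_pos n).le
  nlinarith [Nat.cast_nonneg (α := ℝ) n]

lemma qk_succ_nonneg (k : ℕ) : 0 ≤ qk (k + 1) := by
  rw [qk_succ]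
  have : (0:ℝ) ≤ Real.sqrt 3 := Real.sqrt_nonneg 3
  positivity

lemma t_eq (n : ℕ) : Real.sqrt 3 * dfac n / (12 * (n + 1)! * 2 ^ n)
    = Real.sqrt 3 / 12 * ee n := by
  unfold ee; ring

lemma hasSumA : HasSum (fun k => qk (k + 1)) (Real.sqrt 3 / 12) := by
  rw [hasSum_iff_tendsto_nat_of_nonneg qk_succ_nonneg]
  have : (fun n : ℕ => ∑ k ∈ range n, qk (k + 1))
      = fun n : ℕ => Real.sqrt 3 / 12 - Real.sqrt 3 / 12 * ee n := by
    funext n; rw [sumA, t_eq]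
  rw [this]
  have h := (ee_tendsto.const_mul (Real.sqrt 3 / 12)).const_sub (Real.sqrt 3 / 12)
  simpa using h

lemma hasSumB : HasSum (fun k : ℕ => ((k:ℝ) + 1) * qk (k + 1)) (Real.sqrt 3 / 6) := by
  rw [hasSum_iff_tendsto_nat_of_nonneg
    (fun k => mul_nonneg (by positivity) (qk_succ_nonneg k))]
  have : (fun n : ℕ => ∑ k ∈ range n, ((k:ℝ) + 1) * qk (k + 1))
      = fun n : ℕ => Real.sqrt 3 / 6 - Real.sqrt 3 / 12 * ((3 * (n:ℝ) + 2) * ee n) := by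
    funext n
    rw [sumB]
    have h2k : (2:ℝ) ^ n ≠ 0 := by positivity
    have hf : ((n+1)! : ℝ) ≠ 0 := by positivity
    unfold ee
    field_simp
  rw [this]
  have h := (mul_ee_tendsto.const_mul (Real.sqrt 3 / 12)).const_sub (Real.sqrt 3 / 6)
  simpa using h

theorem q_identities' :
    Summable qk ∧ Summable (fun k : ℕ => (k : ℝ) * qk k) ∧
    1 / Real.sqrt 3 + 2 * ∑' k : ℕ, qk k = 1 ∧
    1 / Real.sqrt 3 - 2 * ∑' k : ℕ, (k : ℝ) * qk k = 0 := by
  have hs1 : Summable qk := (summable_nat_add_iff 1).1 hasSumA.summable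
  have hBfun : (fun k : ℕ => ((k + 1 : ℕ) : ℝ) * qk (k + 1))
      = fun k : ℕ => ((k:ℝ) + 1) * qk (k + 1) := by
    funext k; push_cast; ring
  have hs2 : Summable (fun k : ℕ => (k : ℝ) * qk k) := by
    apply (summable_nat_add_iff 1).1
    rw [hBfun]
    exact hasSumB.summable
  have ht1 : ∑' k : ℕ, qk k = (2 - Real.sqrt 3) / 4 + Real.sqrt 3 / 12 := by
    rw [Summable.tsum_eq_zero_add hs1, qk_zero, hasSumA.tsum_eq]
  have ht2 : ∑' k : ℕ, (k : ℝ) * qk k = Real.sqrt 3 / 6 := by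
    rw [Summable.tsum_eq_zero_add hs2]
    simp only [Nat.cast_zero, zero_mul, zero_add]
    rw [show (fun k : ℕ => ((k + 1 : ℕ) : ℝ) * qk (k + 1))
        = fun k : ℕ => ((k:ℝ) + 1) * qk (k + 1) from hBfun]
    exact hasSumB.tsum_eq
  refine ⟨hs1, hs2, ?_, ?_⟩
  · rw [ht1]
    have hs := sqrt3_pos.ne'
    field_simp
    linear_combination (-16) * sqrt3_sq
  · rw [ht2]
    have hs := sqrt3_pos.ne'
    field_simp
    linear_combination (-2) * sqrt3_sq

/-- With `q_{-1} = 1/√3`: `q_{-1} + 2 Σ_k q_k = 1` and `q_{-1} - 2 Σ_k k q_k = 0`. -/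
theorem q_identities :
    Summable qk ∧ Summable (fun k : ℕ => (k : ℝ) * qk k) ∧
    1 / Real.sqrt 3 + 2 * ∑' k : ℕ, qk k = 1 ∧
    1 / Real.sqrt 3 - 2 * ∑' k : ℕ, (k : ℝ) * qk k = 0 := q_identities'
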